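/- Let p be a prime and let ℤ_(p) denote the localization of ℤ at the prime p (rationals with denominator prime to p). Then evaluation at 1 defines a group isomorphism Hom(ℤ_(p), ℚ_p/ℤ_p) ≅ ℚ_p/ℤ_p. Moreover every homomorphism φ : ℤ_(p) → ℚ_p/ℤ_p is annihilated by some power of p (p^r · φ = 0 for some r), so that the natural map colim_r Hom(ℤ/p^r, ℚ_p/ℤ_p) → Hom(ℤ_(p), ℚ_p/ℤ_p), induced by the quotient maps ℤ_(p) → ℤ/p^r, is a bijection. -/

import Mathlib

/-- The `p`-primary part `ℚ_p/ℤ_p` of `ℚ/ℤ = AddCircle (1 : ℚ)`. -/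
def pPrimaryPart (p : ℕ) : AddSubgroup (AddCircle (1 : ℚ)) where
  carrier := {x | ∃ r : ℕ, p ^ r • x = 0}
  zero_mem' := ⟨0, smul_zero _⟩
  add_mem' := by
    rintro a b ⟨r, hr⟩ ⟨s, hs⟩
    refine ⟨r + s, ?_⟩
    have ha : (p ^ (r + s)) • a = 0 := by
      rw [pow_add, mul_comm, ← smul_smul, hr, smul_zero]
    have hb : (p ^ (r + s)) • b = 0 := by
      rw [pow_add, ← smul_smul, hs, smul_zero]
    rw [smul_add, ha, hb, add_zero]
  neg_mem' := by
    rintro a ⟨r, hr⟩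
    exact ⟨r, by rw [smul_neg, hr, neg_zero]⟩

/-- `ℤ_(p) ⊆ ℚ`, the additive group of rationals with denominator prime to `p`. -/
def ZLocal (p : ℕ) (hp : p.Prime) : AddSubgroup ℚ where
  carrier := {q | ¬ p ∣ q.den}
  zero_mem' := by
    simp only [Set.mem_setOf_eq, Rat.den_zero, Nat.dvd_one]
    exact hp.ne_one
  add_mem' := by
    intro a b ha hb h
    rcases (hp.dvd_mul.mp (h.trans (Rat.add_den_dvd a b))) with h' | h'
    exacts [ha h', hb h']
  neg_mem' := by
    intro a ha
    simpa only [Set.mem_setOf_eq, Rat.den_neg_eq_den] using ha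

lemma one_mem_ZLocal (p : ℕ) (hp : p.Prime) : (1 : ℚ) ∈ ZLocal p hp := by
  simp only [ZLocal, AddSubgroup.mem_mk, Set.mem_setOf_eq, Rat.den_one, Nat.dvd_one]
  exact (show ¬ p ∣ (1 : ℚ).den by simp only [Rat.den_one, Nat.dvd_one]; exact hp.ne_one)

/-- The reduction map `ℤ_(p) → ℤ/p^r`, sending `a/b` to `a · b⁻¹ mod p^r`. -/
def ZLocalProj (p : ℕ) (hp : p.Prime) (r : ℕ) (q : ↥(ZLocal p hp)) : ZMod (p ^ r) :=
  ((q : ℚ).num : ZMod (p ^ r)) * ((q : ℚ).den : ZMod (p ^ r))⁻¹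


section Aux

variable {p : ℕ} {hp : p.Prime} {r : ℕ}

lemma rat_mul_den (q : ℚ) : q * (q.den : ℚ) = (q.num : ℚ) := by
  have hd : ((q.den : ℚ)) ≠ 0 := Nat.cast_ne_zero.mpr q.den_nz
  exact (eq_div_iff hd).mp (Rat.num_div_den q).symm

lemma mem_ZLocal_iff {q : ℚ} : q ∈ ZLocal p hp ↔ ¬ p ∣ q.den := Iff.rfl

lemma den_isUnit (q : ↥(ZLocal p hp)) : IsUnit (((q : ℚ).den : ZMod (p ^ r))) := by
  rw [ZMod.isUnit_iff_coprime]
  exact Nat.Coprime.pow_right r ((hp.coprime_iff_not_dvd.mpr q.2).symm)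

lemma proj_mul_den (q : ↥(ZLocal p hp)) :
    ZLocalProj p hp r q * (((q : ℚ).den : ZMod (p ^ r))) = (((q : ℚ).num : ZMod (p ^ r))) := by
  rw [ZLocalProj, mul_assoc, ZMod.inv_mul_of_unit _ (den_isUnit q), mul_one]

lemma proj_eq_of {q : ↥(ZLocal p hp)} {x : ZMod (p ^ r)}
    (h : x * (((q : ℚ).den : ZMod (p ^ r))) = (((q : ℚ).num : ZMod (p ^ r)))) :
    x = ZLocalProj p hp r q :=
  (den_isUnit q).mul_right_cancel (h.trans (proj_mul_den q).symm)

lemma proj_mul_eq {q : ↥(ZLocal p hp)} {a : ℤ} {b : ℕ} (hb : IsUnit ((b : ZMod (p ^ r))))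
    (h : (q : ℚ) * b = a) :
    ZLocalProj p hp r q * (b : ZMod (p ^ r)) = (a : ZMod (p ^ r)) := by
  have key : (q : ℚ).num * (b : ℤ) = a * ((q : ℚ).den : ℤ) := by
    have : ((q : ℚ).num : ℚ) * (b : ℚ) = (a : ℚ) * ((q : ℚ).den : ℚ) := by
      rw [← rat_mul_den (q : ℚ), mul_comm ((q : ℚ)) _, mul_assoc, h, mul_comm]
    exact_mod_cast this
  have key2 : ((q : ℚ).num : ZMod (p ^ r)) * (b : ZMod (p ^ r))
      = (a : ZMod (p ^ r)) * ((q : ℚ).den : ZMod (p ^ r)) := by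
    have := congrArg (Int.cast : ℤ → ZMod (p ^ r)) key
    push_cast at this
    exact this
  refine (den_isUnit q).mul_right_cancel ?_
  rw [mul_right_comm, proj_mul_den q, key2]

/-- `ZLocalProj` as an additive homomorphism. -/
def projHom (p : ℕ) (hp : p.Prime) (r : ℕ) : ↥(ZLocal p hp) →+ ZMod (p ^ r) :=
  AddMonoidHom.mk' (ZLocalProj p hp r) (by
    intro q₁ q₂
    have hu₁ : IsUnit ((((q₁ : ℚ)).den : ZMod (p ^ r))) := den_isUnit q₁
    have hu₂ : IsUnit ((((q₂ : ℚ)).den : ZMod (p ^ r))) := den_isUnit q₂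
    have hb : IsUnit ((((q₁ : ℚ).den * (q₂ : ℚ).den : ℕ) : ZMod (p ^ r))) := by
      push_cast; exact hu₁.mul hu₂
    have h : ((q₁ + q₂ : ↥(ZLocal p hp)) : ℚ) * (((q₁ : ℚ).den * (q₂ : ℚ).den : ℕ) : ℚ)
        = (((q₁ : ℚ).num * (q₂ : ℚ).den + (q₂ : ℚ).num * (q₁ : ℚ).den : ℤ) : ℚ) := by
      push_cast
      rw [add_mul,
        show (q₁ : ℚ) * (((q₁ : ℚ).den : ℚ) * ((q₂ : ℚ).den : ℚ))
          = ((q₁ : ℚ) * (q₁ : ℚ).den) * (q₂ : ℚ).den by ring,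
        show (q₂ : ℚ) * (((q₁ : ℚ).den : ℚ) * ((q₂ : ℚ).den : ℚ))
          = ((q₂ : ℚ) * (q₂ : ℚ).den) * (q₁ : ℚ).den by ring,
        rat_mul_den, rat_mul_den]
    have h1 := proj_mul_eq (q := q₁ + q₂) hb h
    have h2 : (ZLocalProj p hp r q₁ + ZLocalProj p hp r q₂)
        * (((q₁ : ℚ).den * (q₂ : ℚ).den : ℕ) : ZMod (p ^ r))
        = (((q₁ : ℚ).num * (q₂ : ℚ).den + (q₂ : ℚ).num * (q₁ : ℚ).den : ℤ) : ZMod (p ^ r)) := by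
      have e₁ : ZLocalProj p hp r q₁ * ((((q₁ : ℚ).den : ZMod (p ^ r))) * (((q₂ : ℚ).den : ZMod (p ^ r))))
          = (((q₁ : ℚ).num : ZMod (p ^ r))) * (((q₂ : ℚ).den : ZMod (p ^ r))) := by
        rw [← mul_assoc, proj_mul_den]
      have e₂ : ZLocalProj p hp r q₂ * ((((q₁ : ℚ).den : ZMod (p ^ r))) * (((q₂ : ℚ).den : ZMod (p ^ r))))
          = (((q₂ : ℚ).num : ZMod (p ^ r))) * (((q₁ : ℚ).den : ZMod (p ^ r))) := by
        rw [mul_comm (((q₁ : ℚ).den : ZMod (p ^ r))) _, ← mul_assoc, proj_mul_den]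
      push_cast
      push_cast at e₁ e₂
      rw [add_mul, e₁, e₂]
    exact hb.mul_right_cancel (h1.trans h2.symm))

lemma projHom_apply (q : ↥(ZLocal p hp)) : projHom p hp r q = ZLocalProj p hp r q := rfl

/-- Integers as elements of `ZLocal`. -/
def intElt (p : ℕ) (hp : p.Prime) (n : ℤ) : ↥(ZLocal p hp) :=
  ⟨(n : ℚ), by rw [mem_ZLocal_iff, Rat.den_intCast, Nat.dvd_one]; exact hp.ne_one⟩

lemma proj_intElt (n : ℤ) : ZLocalProj p hp r (intElt p hp n) = (n : ZMod (p ^ r)) := by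
  refine (proj_eq_of ?_).symm
  simp [intElt]

lemma proj_surjective : Function.Surjective (ZLocalProj p hp r) := by
  intro x
  obtain ⟨n, rfl⟩ := ZMod.intCast_surjective x
  exact ⟨intElt p hp n, proj_intElt n⟩

lemma one_elt_eq : (⟨1, one_mem_ZLocal p hp⟩ : ↥(ZLocal p hp)) = intElt p hp 1 := by
  apply Subtype.ext; simp [intElt]

lemma pow_smul_eq_zero (y : ↥(pPrimaryPart p)) : ∃ r : ℕ, p ^ r • y = 0 := by
  obtain ⟨r, hr⟩ := y.2
  exact ⟨r, by ext; simpa using hr⟩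

lemma eval_injective :
    Function.Injective
      (fun φ : ↥(ZLocal p hp) →+ ↥(pPrimaryPart p) => φ ⟨1, one_mem_ZLocal p hp⟩) := by
  have key : ∀ φ : ↥(ZLocal p hp) →+ ↥(pPrimaryPart p),
      φ ⟨1, one_mem_ZLocal p hp⟩ = 0 → φ = 0 := by
    intro φ h0
    ext q
    obtain ⟨s, hs⟩ := pow_smul_eq_zero (φ q)
    have hq : ((q : ℚ).den) • q = ((q : ℚ).num) • (⟨1, one_mem_ZLocal p hp⟩ : ↥(ZLocal p hp)) := by
      apply Subtype.ext
      push_cast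
      simpa [mul_comm] using rat_mul_den (q : ℚ)
    have hden : ((q : ℚ).den) • φ q = 0 := by
      rw [← map_nsmul, hq, map_zsmul, h0, smul_zero]
    have hco : IsCoprime ((q : ℚ).den : ℤ) ((p : ℤ) ^ s) := by
      have hnat : Nat.Coprime (q : ℚ).den (p ^ s) :=
        Nat.Coprime.pow_right s ((hp.coprime_iff_not_dvd.mpr q.2).symm)
      have := hnat.isCoprime
      rwa [Nat.cast_pow] at this
    obtain ⟨u, v, huv⟩ := hco
    have : φ q = (u * ((q : ℚ).den : ℤ) + v * (p : ℤ) ^ s) • φ q := by rw [huv, one_smul]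
    rw [this, add_smul, mul_smul, mul_smul]
    have e1 : ((q : ℚ).den : ℤ) • φ q = 0 := by
      rw [natCast_zsmul]; exact hden
    have e2 : ((p : ℤ) ^ s) • φ q = 0 := by
      have : ((p : ℤ) ^ s) • φ q = (p ^ s : ℕ) • φ q := by
        rw [← natCast_zsmul, Nat.cast_pow]
      rw [this]; exact hs
    rw [e1, e2, smul_zero, smul_zero, add_zero]
    rfl
  intro φ₁ φ₂ h
  have h2 : (φ₁ - φ₂) ⟨1, one_mem_ZLocal p hp⟩ = 0 := by
    rw [AddMonoidHom.sub_apply, sub_eq_zero]; exact h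
  have := key _ h2
  rwa [sub_eq_zero] at this

/-- The homomorphism `ZMod (p ^ r) →+ pPrimaryPart p` attached to `y` with `p ^ r • y = 0`. -/
noncomputable def psiOf (p : ℕ) (r : ℕ) (y : ↥(pPrimaryPart p)) (hy : p ^ r • y = 0) :
    ZMod (p ^ r) →+ ↥(pPrimaryPart p) :=
  ZMod.lift (p ^ r) ⟨zmultiplesHom _ y, by
    have : ((p ^ r : ℕ) : ℤ) • y = 0 := by rw [natCast_zsmul]; exact hy
    rw [zmultiplesHom_apply]
    exact this⟩

lemma proj_one' : ZLocalProj p hp r (⟨1, one_mem_ZLocal p hp⟩ : ↥(ZLocal p hp))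
    = (((1 : ℤ) : ZMod (p ^ r))) := by
  rw [one_elt_eq, proj_intElt]

lemma psiOf_intCast (y : ↥(pPrimaryPart p)) (hy : p ^ r • y = 0) (n : ℤ) :
    psiOf p r y hy ((n : ZMod (p ^ r))) = n • y := by
  simp [psiOf, zmultiplesHom]

end Aux

/-- Evaluation at `1` is an isomorphism `Hom(ℤ_(p), ℚ_p/ℤ_p) ≅ ℚ_p/ℤ_p`; every
homomorphism `ℤ_(p) → ℚ_p/ℤ_p` is annihilated by a power of `p`; and the
natural map `colim_r Hom(ℤ/p^r, ℚ_p/ℤ_p) → Hom(ℤ_(p), ℚ_p/ℤ_p)` induced by the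
reductions `ℤ_(p) → ℤ/p^r` is a bijection (every homomorphism factors through
some reduction, and the factorization at each level is unique). -/
theorem hom_zLocal_pPrimary (p : ℕ) (hp : p.Prime) :
    Function.Bijective
      (fun φ : ↥(ZLocal p hp) →+ ↥(pPrimaryPart p) => φ ⟨1, one_mem_ZLocal p hp⟩) ∧
    (∀ φ : ↥(ZLocal p hp) →+ ↥(pPrimaryPart p), ∃ r : ℕ, ∀ x, p ^ r • φ x = 0) ∧
    (∀ φ : ↥(ZLocal p hp) →+ ↥(pPrimaryPart p),
      ∃ (r : ℕ) (ψ : ZMod (p ^ r) →+ ↥(pPrimaryPart p)),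
        ∀ x, φ x = ψ (ZLocalProj p hp r x)) ∧
    (∀ (r : ℕ) (ψ ψ' : ZMod (p ^ r) →+ ↥(pPrimaryPart p)),
      (∀ x, ψ (ZLocalProj p hp r x) = ψ' (ZLocalProj p hp r x)) → ψ = ψ') := by
  
  have hinj := eval_injective (p := p) (hp := hp)
  constructor
  · refine ⟨hinj, ?_⟩
    intro y
    obtain ⟨r, hr⟩ := pow_smul_eq_zero y
    refine ⟨(psiOf p r y hr).comp (projHom p hp r), ?_⟩
    simp only [AddMonoidHom.comp_apply, projHom_apply, one_elt_eq, proj_intElt]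
    rw [psiOf_intCast]
    exact one_smul _ _
  have ann : ∀ φ : ↥(ZLocal p hp) →+ ↥(pPrimaryPart p), ∃ r : ℕ, ∀ x, p ^ r • φ x = 0 := by
    intro φ
    obtain ⟨r, hr⟩ := pow_smul_eq_zero (φ ⟨1, one_mem_ZLocal p hp⟩)
    refine ⟨r, ?_⟩
    have hz : p ^ r • φ = 0 := by
      apply hinj
      show (p ^ r • φ) ⟨1, one_mem_ZLocal p hp⟩ = (0 : ↥(ZLocal p hp) →+ ↥(pPrimaryPart p)) ⟨1, one_mem_ZLocal p hp⟩
      rw [AddMonoidHom.nsmul_apply, AddMonoidHom.zero_apply, hr]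
    intro x
    have := congrArg (fun ψ : ↥(ZLocal p hp) →+ ↥(pPrimaryPart p) => ψ x) hz
    simp only [AddMonoidHom.nsmul_apply, AddMonoidHom.zero_apply] at this
    exact this
  refine ⟨ann, ?_, ?_⟩
  · intro φ
    obtain ⟨r, hr⟩ := pow_smul_eq_zero (φ ⟨1, one_mem_ZLocal p hp⟩)
    refine ⟨r, psiOf p r _ hr, ?_⟩
    have heq : φ = (psiOf p r _ hr).comp (projHom p hp r) := by
      apply hinj
      show φ ⟨1, one_mem_ZLocal p hp⟩ = ((psiOf p r _ hr).comp (projHom p hp r)) ⟨1, one_mem_ZLocal p hp⟩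
      rw [AddMonoidHom.comp_apply, projHom_apply, proj_one', psiOf_intCast, one_smul]
    intro x
    conv_lhs => rw [heq]
    rfl
  · intro r ψ ψ' h
    ext x
    obtain ⟨q, rfl⟩ := proj_surjective (p := p) (hp := hp) (r := r) x
    rw [h q]
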